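/- Consider the reframed closed-loop bittide dynamics θ'(t) = A·θ(t) + ω^u + q* + r, where A is an irreducible rate matrix with positive left null vector z (z > 0 entrywise, z^T A = 0, 1^T z = 1), W = 1·z^T is the spectral projector, r satisfies W·r = 0, and the reframing offset is q* = (W − I)·ω^u + W·r. Then for any initial condition, the correction c(t) = A·θ(t) + q* + r converges to (W − I)·ω^u as t → ∞, and hence the frequency ω(t) = θ'(t) = c(t) + ω^u converges to W·ω^u = 1·(z^T ω^u). -/

import Mathlib

open Matrix Filter

namespace BittideAux

open NormedSpace

attribute [local instance] Matrix.linftyOpNormedAddCommGroup Matrix.linftyOpNormedRing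
  Matrix.linftyOpNormedAlgebra

variable {n : ℕ}

/-- entry extraction as a continuous linear map -/
noncomputable def entryCLM (i j : Fin n) : Matrix (Fin n) (Fin n) ℝ →L[ℝ] ℝ :=
  LinearMap.toContinuousLinearMap
    { toFun := fun M => M i j
      map_add' := fun _ _ => rfl
      map_smul' := fun _ _ => rfl }

noncomputable def mulVecCLM (v : Fin n → ℝ) : Matrix (Fin n) (Fin n) ℝ →L[ℝ] (Fin n → ℝ) :=
  LinearMap.toContinuousLinearMap
    { toFun := fun M => M *ᵥ v
      map_add' := fun M N => Matrix.add_mulVec M N v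
      map_smul' := fun c M => Matrix.smul_mulVec c M v }

noncomputable def vecMulCLM (z : Fin n → ℝ) : Matrix (Fin n) (Fin n) ℝ →L[ℝ] (Fin n → ℝ) :=
  LinearMap.toContinuousLinearMap
    { toFun := fun M => z ᵥ* M
      map_add' := fun M N => Matrix.vecMul_add M N z
      map_smul' := fun c M => by
        ext j; simp [Matrix.vecMul, dotProduct, Finset.mul_sum, mul_left_comm] }

lemma hasSum_exp (B : Matrix (Fin n) (Fin n) ℝ) :
    HasSum (fun k : ℕ => ((k.factorial : ℝ)⁻¹) • B ^ k) (exp B) := by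
  have h := expSeries_summable' (𝕂 := ℝ) (x := B)
  exact exp_series_hasSum_exp' B

lemma hasSum_exp_entry (B : Matrix (Fin n) (Fin n) ℝ) (i j : Fin n) :
    HasSum (fun k : ℕ => ((k.factorial : ℝ)⁻¹) * (B ^ k) i j) (exp B i j) := by
  have := (hasSum_exp B).mapL (entryCLM i j)
  exact this

lemma hasSum_exp_mulVec (B : Matrix (Fin n) (Fin n) ℝ) (v : Fin n → ℝ) :
    HasSum (fun k : ℕ => ((k.factorial : ℝ)⁻¹) • (B ^ k *ᵥ v)) (exp B *ᵥ v) := by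
  have := (hasSum_exp B).mapL (mulVecCLM v)
  simpa [mulVecCLM, Matrix.smul_mulVec] using this

lemma hasSum_exp_vecMul (B : Matrix (Fin n) (Fin n) ℝ) (z : Fin n → ℝ) :
    HasSum (fun k : ℕ => ((k.factorial : ℝ)⁻¹) • (z ᵥ* B ^ k)) (z ᵥ* exp B) := by
  have := (hasSum_exp B).mapL (vecMulCLM z)
  have h2 : ∀ (c : ℝ) (M : Matrix (Fin n) (Fin n) ℝ), z ᵥ* (c • M) = c • (z ᵥ* M) := by
    intro c M; ext j; simp [Matrix.vecMul, dotProduct, Finset.mul_sum, mul_left_comm]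
  simpa [vecMulCLM, h2] using this

lemma pow_entry_nonneg {B : Matrix (Fin n) (Fin n) ℝ} (hB : ∀ i j, 0 ≤ B i j) (k : ℕ) :
    ∀ i j, 0 ≤ (B ^ k) i j := by
  induction k with
  | zero =>
    intro i j; rw [pow_zero]
    by_cases h : i = j <;> simp [Matrix.one_apply, h]
  | succ k ih =>
    intro i j; rw [pow_succ, Matrix.mul_apply]
    exact Finset.sum_nonneg fun m _ => mul_nonneg (ih i m) (hB m j)

lemma exp_entry_nonneg {B : Matrix (Fin n) (Fin n) ℝ} (hB : ∀ i j, 0 ≤ B i j) (i j : Fin n) :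
    0 ≤ exp B i j :=
  (hasSum_exp_entry B i j).nonneg fun k =>
    mul_nonneg (by positivity) (pow_entry_nonneg hB k i j)

lemma le_exp_entry {B : Matrix (Fin n) (Fin n) ℝ} (hB : ∀ i j, 0 ≤ B i j) (k : ℕ) (i j : Fin n) :
    ((k.factorial : ℝ)⁻¹) * (B ^ k) i j ≤ exp B i j :=
  le_hasSum (hasSum_exp_entry B i j) k fun m _ =>
    mul_nonneg (by positivity) (pow_entry_nonneg hB m i j)

lemma exp_mulVec_one (A : Matrix (Fin n) (Fin n) ℝ) (hA : A *ᵥ (fun _ => (1:ℝ)) = 0) :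
    exp A *ᵥ (fun _ => (1:ℝ)) = fun _ => (1:ℝ) := by
  have hpow : ∀ k : ℕ, k ≠ 0 → (A ^ k) *ᵥ (fun _ => (1:ℝ)) = 0 := by
    intro k hk
    obtain ⟨m, rfl⟩ := Nat.exists_eq_succ_of_ne_zero hk
    rw [pow_succ, ← Matrix.mulVec_mulVec, hA, Matrix.mulVec_zero]
  have h1 : HasSum (fun k : ℕ => ((k.factorial : ℝ)⁻¹) • (A ^ k *ᵥ (fun _ => (1:ℝ))))
      (fun _ => (1:ℝ)) := by
    have := hasSum_single (f := fun k : ℕ => ((k.factorial : ℝ)⁻¹) • (A ^ k *ᵥ (fun _ => (1:ℝ)))) 0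
      (fun b hb => by rw [hpow b hb, smul_zero])
    simpa using this
  exact (hasSum_exp_mulVec A _).unique h1

lemma exp_vecMul_z (A : Matrix (Fin n) (Fin n) ℝ) (z : Fin n → ℝ) (hz : z ᵥ* A = 0) :
    z ᵥ* exp A = z := by
  have hpow : ∀ k : ℕ, k ≠ 0 → z ᵥ* (A ^ k) = 0 := by
    intro k hk
    obtain ⟨m, rfl⟩ := Nat.exists_eq_succ_of_ne_zero hk
    rw [pow_succ', ← Matrix.vecMul_vecMul, hz, Matrix.zero_vecMul]
  have h1 : HasSum (fun k : ℕ => ((k.factorial : ℝ)⁻¹) • (z ᵥ* A ^ k)) z := by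
    have := hasSum_single (f := fun k : ℕ => ((k.factorial : ℝ)⁻¹) • (z ᵥ* A ^ k)) 0
      (fun b hb => by rw [hpow b hb, smul_zero])
    simpa using this
  exact (hasSum_exp_vecMul A z).unique h1

lemma abs_diag_le_norm (A : Matrix (Fin n) (Fin n) ℝ) (i : Fin n) : |A i i| ≤ ‖A‖ := by
  have h1 : ‖A i i‖₊ ≤ ∑ j, ‖A i j‖₊ :=
    Finset.single_le_sum (f := fun j => ‖A i j‖₊) (fun _ _ => zero_le) (Finset.mem_univ i)
  have h2 : (∑ j, ‖A i j‖₊) ≤ ‖A‖₊ := by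
    rw [Matrix.linfty_opNNNorm_def]
    exact Finset.le_sup (f := fun i => ∑ j, ‖A i j‖₊) (Finset.mem_univ i)
  calc |A i i| = ‖A i i‖ := (Real.norm_eq_abs _).symm
    _ ≤ ‖A‖ := by exact_mod_cast h1.trans h2

lemma exists_pow_pos {B : Matrix (Fin n) (Fin n) ℝ} (hB : ∀ i j, 0 ≤ B i j) {i j : Fin n}
    (h : Relation.TransGen (fun a b => 0 < B a b) i j) : ∃ k, 0 < (B ^ (k + 1)) i j := by
  induction h with
  | single hb => exact ⟨0, by simpa using hb⟩
  | @tail b c hib hbc ih =>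
    obtain ⟨k, hk⟩ := ih
    refine ⟨k + 1, ?_⟩
    rw [pow_succ, Matrix.mul_apply]
    exact lt_of_lt_of_le (mul_pos hk hbc)
      (Finset.single_le_sum (f := fun m => (B ^ (k + 1)) i m * B m c)
        (fun m _ => mul_nonneg (pow_entry_nonneg hB _ i m) (hB m c)) (Finset.mem_univ b))

lemma exp_decomp (A : Matrix (Fin n) (Fin n) ℝ) (s : ℝ) :
    exp A = Real.exp (-s) • exp (A + s • 1) := by
  have hA : A = (A + s • (1 : Matrix (Fin n) (Fin n) ℝ)) + (-s) • 1 := by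
    rw [neg_smul, add_neg_cancel_right]
  have hc : Commute (A + s • (1 : Matrix (Fin n) (Fin n) ℝ)) ((-s) • 1) :=
    ((Commute.one_right _).smul_right (-s))
  have hexp1 : exp ((-s) • (1 : Matrix (Fin n) (Fin n) ℝ)) = Real.exp (-s) • 1 := by
    rw [← Algebra.algebraMap_eq_smul_one]
    erw [← algebraMap_exp_comm]
    rw [← Real.exp_eq_exp_ℝ, Algebra.algebraMap_eq_smul_one]
  calc exp A = exp ((A + s • 1) + (-s) • 1) := by rw [← hA]
    _ = exp (A + s • 1) * exp ((-s) • 1) := Matrix.exp_add_of_commute _ _ hc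
    _ = Real.exp (-s) • exp (A + s • 1) := by
        rw [hexp1, mul_smul_comm, mul_one]

lemma exp_entry_pos {A : Matrix (Fin n) (Fin n) ℝ}
    (hM : ∀ i j : Fin n, i ≠ j → 0 ≤ A i j)
    (hirr : ∀ i j : Fin n, i ≠ j →
      Relation.TransGen (fun a b => a ≠ b ∧ A a b ≠ 0) i j) (i j : Fin n) :
    0 < exp A i j := by
  set s : ℝ := ‖A‖ + 1 with hs
  set B : Matrix (Fin n) (Fin n) ℝ := A + s • 1 with hBdef
  have hdiag : ∀ a : Fin n, 0 < B a a := by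
    intro a
    have h1 := abs_diag_le_norm A a
    have : B a a = A a a + s := by simp [hBdef, Matrix.one_apply]
    rw [this, hs]
    have := (abs_le.mp h1).1
    linarith
  have hBnn : ∀ a b, 0 ≤ B a b := by
    intro a b
    by_cases h : a = b
    · subst h; exact (hdiag a).le
    · have : B a b = A a b := by simp [hBdef, Matrix.one_apply, h]
      rw [this]; exact hM a b h
  have key : ∃ k, 0 < (B ^ (k + 1)) i j := by
    by_cases h : i = j
    · exact ⟨0, by simpa [h] using hdiag j⟩
    · refine exists_pow_pos hBnn (Relation.TransGen.mono ?_ _ _ (hirr i j h))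
      intro a b hab
      have : B a b = A a b := by simp [hBdef, Matrix.one_apply, hab.1]
      rw [this]
      exact lt_of_le_of_ne (hM a b hab.1) (Ne.symm hab.2)
  obtain ⟨k, hk⟩ := key
  have hlow : 0 < exp B i j :=
    lt_of_lt_of_le (by positivity : (0:ℝ) < (((k+1).factorial : ℝ)⁻¹) * (B ^ (k+1)) i j)
      (le_exp_entry hBnn (k + 1) i j)
  have : exp A i j = Real.exp (-s) * exp B i j := by
    rw [exp_decomp A s]; simp [hBdef]
  rw [this]
  positivity

section Osc
variable [Nonempty (Fin n)]

noncomputable def osc (v : Fin n → ℝ) : ℝ :=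
  Finset.univ.sup' Finset.univ_nonempty v - Finset.univ.inf' Finset.univ_nonempty v

lemma osc_nonneg (v : Fin n → ℝ) : 0 ≤ osc v := by
  obtain ⟨i⟩ := ‹Nonempty (Fin n)›
  have h1 : Finset.univ.inf' Finset.univ_nonempty v ≤ v i := Finset.inf'_le _ (Finset.mem_univ i)
  have h2 : v i ≤ Finset.univ.sup' Finset.univ_nonempty v := Finset.le_sup' _ (Finset.mem_univ i)
  unfold osc; linarith

lemma osc_mulVec_le {P : Matrix (Fin n) (Fin n) ℝ} {ε : ℝ}
    (hP : ∀ i j, ε ≤ P i j) (hrow : ∀ i, ∑ j, P i j = 1) (v : Fin n → ℝ) :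
    osc (P *ᵥ v) ≤ (1 - n * ε) * osc v := by
  set M := Finset.univ.sup' Finset.univ_nonempty v with hM
  set μ := Finset.univ.inf' Finset.univ_nonempty v with hμ
  have hvM : ∀ j, v j ≤ M := fun j => Finset.le_sup' _ (Finset.mem_univ j)
  have hvμ : ∀ j, μ ≤ v j := fun j => Finset.inf'_le _ (Finset.mem_univ j)
  have hosc : osc v = M - μ := rfl
  have key : ∀ i k, (P *ᵥ v) i - (P *ᵥ v) k ≤ (1 - n * ε) * (M - μ) := by
    intro i k
    set m : Fin n → ℝ := fun j => min (P i j) (P k j) with hm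
    set S : ℝ := ∑ j, m j with hS
    have hSε : (n : ℝ) * ε ≤ S := by
      rw [hS]
      calc (n : ℝ) * ε = ∑ _j : Fin n, ε := by simp [mul_comm]
        _ ≤ ∑ j, m j := Finset.sum_le_sum fun j _ => le_min (hP i j) (hP k j)
    have hS1 : S ≤ 1 := by
      rw [hS, ← hrow i]
      exact Finset.sum_le_sum fun j _ => min_le_left _ _
    have hdiff : (P *ᵥ v) i - (P *ᵥ v) k
        = (∑ j, (P i j - m j) * v j) - ∑ j, (P k j - m j) * v j := by
      simp only [Matrix.mulVec, dotProduct, sub_mul]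
      rw [Finset.sum_sub_distrib, Finset.sum_sub_distrib]
      ring
    have h1 : (∑ j, (P i j - m j) * v j) ≤ (1 - S) * M := by
      have : (∑ j, (P i j - m j) * v j) ≤ ∑ j, (P i j - m j) * M :=
        Finset.sum_le_sum fun j _ =>
          mul_le_mul_of_nonneg_left (hvM j) (by simp [hm, sub_nonneg, min_le_left])
      calc (∑ j, (P i j - m j) * v j) ≤ ∑ j, (P i j - m j) * M := this
        _ = (1 - S) * M := by rw [← Finset.sum_mul, Finset.sum_sub_distrib, hrow i, hS]
    have h2 : (1 - S) * μ ≤ ∑ j, (P k j - m j) * v j := by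
      have : (∑ j, (P k j - m j) * μ) ≤ ∑ j, (P k j - m j) * v j :=
        Finset.sum_le_sum fun j _ =>
          mul_le_mul_of_nonneg_left (hvμ j) (by simp [hm, sub_nonneg, min_le_right])
      calc (1 - S) * μ = ∑ j, (P k j - m j) * μ := by
            rw [← Finset.sum_mul, Finset.sum_sub_distrib, hrow k, hS]
        _ ≤ ∑ j, (P k j - m j) * v j := this
    have hMμ : 0 ≤ M - μ := by rw [← hosc]; exact osc_nonneg v
    have h3 : (1 - S) * (M - μ) ≤ (1 - n * ε) * (M - μ) :=
      mul_le_mul_of_nonneg_right (by linarith) hMμ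
    calc (P *ᵥ v) i - (P *ᵥ v) k ≤ (1 - S) * M - (1 - S) * μ := by rw [hdiff]; linarith
      _ = (1 - S) * (M - μ) := by ring
      _ ≤ (1 - n * ε) * (M - μ) := h3
  rw [hosc]
  unfold osc
  rw [sub_le_iff_le_add]
  apply Finset.sup'_le
  intro i _
  have h4 : (P *ᵥ v) i - (1 - n * ε) * (M - μ) ≤ Finset.univ.inf' Finset.univ_nonempty (P *ᵥ v) :=
    Finset.le_inf' _ _ fun k _ => by linarith [key i k]
  linarith

lemma norm_le_osc {z w : Fin n → ℝ} (hz : ∀ i, 0 < z i) (hw : ∑ i, z i * w i = 0) :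
    ‖w‖ ≤ osc w := by
  set M := Finset.univ.sup' Finset.univ_nonempty w with hM
  set μ := Finset.univ.inf' Finset.univ_nonempty w with hμ
  have hwM : ∀ j, w j ≤ M := fun j => Finset.le_sup' _ (Finset.mem_univ j)
  have hwμ : ∀ j, μ ≤ w j := fun j => Finset.inf'_le _ (Finset.mem_univ j)
  have hex1 : ∃ j, w j ≤ 0 := by
    by_contra h
    push_neg at h
    have : 0 < ∑ i, z i * w i :=
      Finset.sum_pos (fun i _ => mul_pos (hz i) (h i)) Finset.univ_nonempty
    linarith
  have hex2 : ∃ j, 0 ≤ w j := by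
    by_contra h
    push_neg at h
    have : ∑ i, z i * w i < 0 :=
      Finset.sum_neg (fun i _ => mul_neg_of_pos_of_neg (hz i) (h i)) Finset.univ_nonempty
    linarith
  obtain ⟨j1, hj1⟩ := hex1
  obtain ⟨j2, hj2⟩ := hex2
  have hμ0 : μ ≤ 0 := le_trans (hwμ j1) hj1
  have hM0 : 0 ≤ M := le_trans hj2 (hwM j2)
  have hbound : ∀ i, ‖w i‖ ≤ osc w := by
    intro i
    rw [Real.norm_eq_abs, abs_le]
    unfold osc
    constructor <;> [skip; skip] <;> · have := hwM i; have := hwμ i; rw [← hM, ← hμ]; linarith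
  exact (pi_norm_le_iff_of_nonneg ((norm_nonneg (w j1)).trans (hbound j1))).mpr hbound

lemma osc_pow_mulVec_le {P : Matrix (Fin n) (Fin n) ℝ} {ε : ℝ}
    (hP : ∀ i j, ε ≤ P i j) (hrow : ∀ i, ∑ j, P i j = 1) (v : Fin n → ℝ)
    (k : ℕ) : osc (P ^ k *ᵥ v) ≤ (1 - n * ε) ^ k * osc v := by
  induction k with
  | zero => simp [Matrix.one_mulVec]
  | succ k ih =>
    have hg : 0 ≤ 1 - (n:ℝ) * ε := by
      obtain ⟨i⟩ := ‹Nonempty (Fin n)›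
      have h1 : (n:ℝ) * ε ≤ ∑ j, P i j := by
        calc (n:ℝ) * ε = ∑ _j : Fin n, ε := by simp [mul_comm]
          _ ≤ ∑ j, P i j := Finset.sum_le_sum fun j _ => hP i j
      rw [hrow i] at h1
      linarith
    calc osc (P ^ (k+1) *ᵥ v) = osc (P *ᵥ (P ^ k *ᵥ v)) := by
          rw [Matrix.mulVec_mulVec, ← pow_succ']
      _ ≤ (1 - n * ε) * osc (P ^ k *ᵥ v) := osc_mulVec_le hP hrow _
      _ ≤ (1 - n * ε) * ((1 - n * ε) ^ k * osc v) := by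
          exact mul_le_mul_of_nonneg_left ih hg
      _ = (1 - n * ε) ^ (k+1) * osc v := by ring

end Osc

noncomputable def mulVecL (A : Matrix (Fin n) (Fin n) ℝ) : (Fin n → ℝ) →L[ℝ] (Fin n → ℝ) :=
  LinearMap.toContinuousLinearMap (Matrix.mulVecLin A)

lemma lipschitz_mulVec (A : Matrix (Fin n) (Fin n) ℝ) :
    LipschitzWith ‖A‖₊ (fun x : Fin n → ℝ => A *ᵥ x) := by
  apply LipschitzWith.of_dist_le_mul
  intro a b
  rw [dist_eq_norm, dist_eq_norm, ← Matrix.mulVec_sub]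
  exact Matrix.linfty_opNorm_mulVec A (a - b)

lemma ode_eq_exp {A : Matrix (Fin n) (Fin n) ℝ} {y : ℝ → Fin n → ℝ}
    (hy : ∀ t : ℝ, 0 ≤ t → HasDerivAt y (A *ᵥ y t) t) :
    ∀ t : ℝ, 0 ≤ t → y t = exp (t • A) *ᵥ y 0 := by
  intro T hT
  set g : ℝ → Fin n → ℝ := fun t => exp (t • A) *ᵥ y 0 with hgdef
  have hg : ∀ t : ℝ, HasDerivAt g (A *ᵥ g t) t := by
    intro t
    have h1 : HasDerivAt (fun u : ℝ => exp (u • A)) (A * exp (t • A)) t :=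
      hasDerivAt_exp_smul_const' (𝕂 := ℝ) A t
    have h2 := (mulVecCLM (y 0)).hasFDerivAt.comp_hasDerivAt t h1
    have h3 : mulVecCLM (y 0) (A * exp (t • A)) = A *ᵥ g t := by
      simp only [mulVecCLM, LinearMap.coe_toContinuousLinearMap', LinearMap.coe_mk,
        AddHom.coe_mk, hgdef]
      rw [← Matrix.mulVec_mulVec]
    exact h2.congr_deriv h3
  have huniq : Set.EqOn y g (Set.Icc 0 T) := by
    apply ODE_solution_unique (v := fun _ x => A *ᵥ x) (K := ‖A‖₊)
      (fun _ => lipschitz_mulVec A)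
    · intro t ht
      exact ((hy t ht.1).continuousAt).continuousWithinAt
    · intro t ht
      exact (hy t ht.1).hasDerivWithinAt
    · intro t ht
      exact ((hg t).continuousAt).continuousWithinAt
    · intro t ht
      exact (hg t).hasDerivWithinAt
    · simp [hgdef]
  exact huniq ⟨hT, le_refl T⟩

lemma core_tendsto {A : Matrix (Fin n) (Fin n) ℝ} [Nonempty (Fin n)]
    (hM : ∀ i j : Fin n, i ≠ j → 0 ≤ A i j)
    (hA1 : A *ᵥ (fun _ => (1:ℝ)) = 0)
    (hirr : ∀ i j : Fin n, i ≠ j →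
      Relation.TransGen (fun a b => a ≠ b ∧ A a b ≠ 0) i j)
    {z : Fin n → ℝ} (hz_pos : ∀ i, 0 < z i) (hz_left : z ᵥ* A = 0)
    {y : ℝ → Fin n → ℝ}
    (hy : ∀ t : ℝ, 0 ≤ t → HasDerivAt y (A *ᵥ y t) t)
    (hz0 : z ⬝ᵥ y 0 = 0) :
    Tendsto y atTop (nhds 0) := by
  set P : Matrix (Fin n) (Fin n) ℝ := exp A with hP
  have hPpos : ∀ i j, 0 < P i j := exp_entry_pos hM hirr
  have hProw : ∀ i, ∑ j, P i j = 1 := by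
    intro i
    have := congrFun (exp_mulVec_one A hA1) i
    simpa [Matrix.mulVec, dotProduct] using this
  have hPz : z ᵥ* P = z := exp_vecMul_z A z hz_left
  have hPkz : ∀ k : ℕ, z ᵥ* P ^ k = z := by
    intro k
    induction k with
    | zero => simp
    | succ k ih => rw [pow_succ, ← Matrix.vecMul_vecMul, ih, hPz]
  obtain ⟨i₀⟩ := ‹Nonempty (Fin n)›
  set ε : ℝ := Finset.univ.inf' Finset.univ_nonempty
    (fun p : Fin n × Fin n => P p.1 p.2) with hεdef
  have hεpos : 0 < ε := by
    rw [hεdef, Finset.lt_inf'_iff]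
    exact fun p _ => hPpos p.1 p.2
  have hεle : ∀ i j, ε ≤ P i j := by
    intro i j
    exact Finset.inf'_le _ (Finset.mem_univ (⟨i, j⟩ : Fin n × Fin n))
  set γ : ℝ := 1 - n * ε with hγdef
  have hγ0 : 0 ≤ γ := by
    have h1 : (n:ℝ) * ε ≤ ∑ j, P i₀ j := by
      calc (n:ℝ) * ε = ∑ _j : Fin n, ε := by simp [mul_comm]
        _ ≤ ∑ j, P i₀ j := Finset.sum_le_sum fun j _ => hεle i₀ j
    rw [hProw i₀] at h1
    rw [hγdef]; linarith
  have hγ1 : γ < 1 := by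
    have hn : 0 < (n:ℝ) := by
      have : 0 < n := i₀.pos
      exact_mod_cast this
    rw [hγdef]
    nlinarith
  have hsol := ode_eq_exp hy
  have hcont : ContinuousOn (fun u : ℝ => exp (u • A)) (Set.Icc 0 1) := by
    exact (exp_continuous.comp (continuous_id.smul continuous_const)).continuousOn
  obtain ⟨C, hC⟩ := (isCompact_Icc).exists_bound_of_continuousOn hcont
  have hbound : ∀ t : ℝ, 0 ≤ t → ‖y t‖ ≤ (C * osc (y 0)) * γ ^ (⌊t⌋₊) := by
    intro t ht
    set k : ℕ := ⌊t⌋₊ with hk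
    set u : ℝ := t - k with hu
    have hu0 : 0 ≤ u := by
      rw [hu]
      have := Nat.floor_le ht
      linarith
    have hu1 : u ≤ 1 := by
      rw [hu]
      have := Nat.lt_floor_add_one t
      linarith
    have hsplit : exp (t • A) = exp (u • A) * P ^ k := by
      have ht' : t • A = u • A + (k:ℝ) • A := by
        rw [← add_smul]; congr 1; rw [hu]; ring
      have hcomm : Commute (u • A) ((k:ℝ) • A) :=
        ((Commute.refl A).smul_left u).smul_right (k:ℝ)
      rw [ht', Matrix.exp_add_of_commute _ _ hcomm]
      congr 1
      rw [hP, ← Matrix.exp_nsmul, Nat.cast_smul_eq_nsmul]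
    have hyt : y t = exp (u • A) *ᵥ (P ^ k *ᵥ y 0) := by
      rw [hsol t ht, hsplit, ← Matrix.mulVec_mulVec]
    have hz0k : z ⬝ᵥ (P ^ k *ᵥ y 0) = 0 := by
      rw [Matrix.dotProduct_mulVec, hPkz k, hz0]
    have h1 : ‖y t‖ ≤ C * ‖P ^ k *ᵥ y 0‖ := by
      rw [hyt]
      calc ‖exp (u • A) *ᵥ (P ^ k *ᵥ y 0)‖
          ≤ ‖exp (u • A)‖ * ‖P ^ k *ᵥ y 0‖ := Matrix.linfty_opNorm_mulVec _ _
        _ ≤ C * ‖P ^ k *ᵥ y 0‖ :=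
            mul_le_mul_of_nonneg_right (hC u ⟨hu0, hu1⟩) (norm_nonneg _)
    have h2 : ‖P ^ k *ᵥ y 0‖ ≤ osc (P ^ k *ᵥ y 0) :=
      norm_le_osc hz_pos (by simpa [dotProduct] using hz0k)
    have h3 : osc (P ^ k *ᵥ y 0) ≤ γ ^ k * osc (y 0) :=
      osc_pow_mulVec_le hεle hProw (y 0) k
    calc ‖y t‖ ≤ C * ‖P ^ k *ᵥ y 0‖ := h1
      _ ≤ C * (γ ^ k * osc (y 0)) := by
          have hC0 : 0 ≤ C := le_trans (norm_nonneg _) (hC 0 ⟨le_refl 0, zero_le_one⟩)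
          exact mul_le_mul_of_nonneg_left (h2.trans h3) hC0
      _ = (C * osc (y 0)) * γ ^ k := by ring
  rw [tendsto_zero_iff_norm_tendsto_zero]
  apply squeeze_zero' (Filter.Eventually.of_forall fun t => norm_nonneg _)
  · filter_upwards [Filter.eventually_ge_atTop (0:ℝ)] with t ht
    exact hbound t ht
  · have hpow : Tendsto (fun k : ℕ => γ ^ k) atTop (nhds 0) :=
      tendsto_pow_atTop_nhds_zero_of_lt_one hγ0 hγ1
    have hfloor : Tendsto (fun t : ℝ => ⌊t⌋₊) atTop atTop := tendsto_nat_floor_atTop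
    have := (hpow.comp hfloor).const_mul (C * osc (y 0))
    simpa using this

end BittideAux

/-- A matrix is Metzler if all its off-diagonal entries are nonnegative. -/
def IsMetzler {n : ℕ} (Q : Matrix (Fin n) (Fin n) ℝ) : Prop :=
  ∀ i j, i ≠ j → 0 ≤ Q i j

/-- A rate matrix is a Metzler matrix whose rows each sum to zero. -/
def IsRateMatrix {n : ℕ} (Q : Matrix (Fin n) (Fin n) ℝ) : Prop :=
  IsMetzler Q ∧ Q *ᵥ (fun _ => (1 : ℝ)) = 0

/-- A matrix is irreducible if the directed graph with an edge `i → j` whenever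
`i ≠ j` and `Q i j ≠ 0` is strongly connected. -/
def IsIrreducibleMatrix {n : ℕ} (Q : Matrix (Fin n) (Fin n) ℝ) : Prop :=
  ∀ i j : Fin n, i ≠ j → Relation.TransGen (fun a b => a ≠ b ∧ Q a b ≠ 0) i j

/-- Reframed closed-loop bittide dynamics `θ'(t) = A θ(t) + ωᵘ + q* + r`, with
`A` an irreducible rate matrix with positive left null vector `z`, spectral
projector `W = 1·zᵀ`, `W r = 0`, and reframing offset
`q* = (W - I)·ωᵘ + W·r`.  Then the correction `c(t) = A θ(t) + q* + r`
converges to `(W - I)·ωᵘ`, and the frequency `ω(t) = θ'(t) = c(t) + ωᵘ`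
converges to `W·ωᵘ = 1·(zᵀ ωᵘ)`. -/
theorem reframed_correction_and_frequency_tendsto {n : ℕ}
    (A : Matrix (Fin n) (Fin n) ℝ)
    (hrate : IsRateMatrix A) (hirr : IsIrreducibleMatrix A)
    (z : Fin n → ℝ) (hz_pos : ∀ i, 0 < z i)
    (hz_left : z ᵥ* A = 0) (hz_sum : ∑ i, z i = 1)
    (W : Matrix (Fin n) (Fin n) ℝ) (hW : W = vecMulVec (fun _ => (1 : ℝ)) z)
    (ωu r qs : Fin n → ℝ) (hr : W *ᵥ r = 0)
    (hqs : qs = (W - 1) *ᵥ ωu + W *ᵥ r)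
    (θ : ℝ → Fin n → ℝ)
    (hθ : ∀ t : ℝ, 0 ≤ t → HasDerivAt θ (A *ᵥ θ t + ωu + qs + r) t)
    (c : ℝ → Fin n → ℝ) (hc : ∀ t : ℝ, c t = A *ᵥ θ t + qs + r) :
    Tendsto c atTop (nhds ((W - 1) *ᵥ ωu)) ∧
      Tendsto (fun t : ℝ => c t + ωu) atTop (nhds (W *ᵥ ωu)) ∧
      W *ᵥ ωu = fun _ => z ⬝ᵥ ωu := by
  have hWv : ∀ v : Fin n → ℝ, W *ᵥ v = fun _ => z ⬝ᵥ v := by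
    intro v
    funext i
    simp [hW, Matrix.mulVec, Matrix.vecMulVec_apply, dotProduct]
  rcases Nat.eq_zero_or_pos n with hn | hn
  · subst hn
    have he : ∀ v w : Fin 0 → ℝ, v = w := fun v w => funext fun i => i.elim0
    refine ⟨?_, ?_, he _ _⟩
    · have hcc : c = fun _ => (W - 1) *ᵥ ωu := funext fun t => he _ _
      rw [hcc]; exact tendsto_const_nhds
    · have hcc : (fun t : ℝ => c t + ωu) = fun _ => W *ᵥ ωu := funext fun t => he _ _
      rw [hcc]; exact tendsto_const_nhds
  · haveI : Nonempty (Fin n) := ⟨⟨0, hn⟩⟩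
    have hconst0 : ∀ d : ℝ, A *ᵥ (fun _ => d) = 0 := by
      intro d
      have h1 : (fun _ : Fin n => d) = d • (fun _ : Fin n => (1:ℝ)) := by
        funext i; simp
      rw [h1, Matrix.mulVec_smul, hrate.2, smul_zero]
    have hAW : ∀ v : Fin n → ℝ, A *ᵥ (W *ᵥ v) = 0 := by
      intro v; rw [hWv]; exact hconst0 _
    set y : ℝ → Fin n → ℝ := fun t => c t + ωu - W *ᵥ ωu with hydef
    have hy : ∀ t : ℝ, 0 ≤ t → HasDerivAt y (A *ᵥ y t) t := by
      intro t ht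
      have hθd := hθ t ht
      have hD := (BittideAux.mulVecL A).hasFDerivAt.comp_hasDerivAt t hθd
      have hDapp : ∀ v : Fin n → ℝ, BittideAux.mulVecL A v = A *ᵥ v := fun v => by
        simp [BittideAux.mulVecL]
      have hyform : y = fun s => BittideAux.mulVecL A (θ s) + (qs + r + (ωu - W *ᵥ ωu)) := by
        funext s
        rw [hydef]
        simp only [hDapp, hc s]
        abel
      rw [hyform]
      have hd2 := hD.add_const (qs + r + (ωu - W *ᵥ ωu))
      have heq : BittideAux.mulVecL A (A *ᵥ θ t + ωu + qs + r)
          = A *ᵥ (BittideAux.mulVecL A (θ t) + (qs + r + (ωu - W *ᵥ ωu))) := by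
        rw [hDapp, hDapp]
        have h5 : A *ᵥ θ t + ωu + qs + r = (A *ᵥ θ t + (qs + r + (ωu - W *ᵥ ωu))) + W *ᵥ ωu := by
          abel
        rw [h5, Matrix.mulVec_add, hAW, add_zero]
      rw [heq] at hd2
      exact hd2
    have hzW : ∀ v : Fin n → ℝ, z ⬝ᵥ (W *ᵥ v) = z ⬝ᵥ v := by
      intro v
      rw [hWv]
      simp [dotProduct, ← Finset.sum_mul, hz_sum]
    have hzr : z ⬝ᵥ r = 0 := by
      have := congrFun ((hWv r).symm.trans hr) ⟨0, hn⟩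
      have h6 : z ⬝ᵥ (W *ᵥ r) = 0 := by rw [hr]; exact dotProduct_zero z
      rw [hzW] at h6
      exact h6
    have hz0 : z ⬝ᵥ y 0 = 0 := by
      rw [hydef]
      simp only [hc 0, hqs, hr]
      rw [Matrix.sub_mulVec, Matrix.one_mulVec]
      simp only [dotProduct_add, dotProduct_sub]
      rw [Matrix.dotProduct_mulVec, hz_left, zero_dotProduct, hzW]
      simp [hzr]
    have hty : Tendsto y atTop (nhds 0) :=
      BittideAux.core_tendsto hrate.1 hrate.2 hirr hz_pos hz_left hy hz0
    have hceq : c = fun t => y t + (W *ᵥ ωu - ωu) := by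
      funext t
      simp only [hydef]
      abel
    have hlim1 : Tendsto c atTop (nhds (0 + (W *ᵥ ωu - ωu))) := by
      rw [hceq]
      exact hty.add tendsto_const_nhds
    have hlim2 : Tendsto (fun t => c t + ωu) atTop (nhds ((0 + (W *ᵥ ωu - ωu)) + ωu)) :=
      hlim1.add tendsto_const_nhds
    refine ⟨?_, ?_, hWv ωu⟩
    · have h8 : (0 : Fin n → ℝ) + (W *ᵥ ωu - ωu) = (W - 1) *ᵥ ωu := by
        rw [Matrix.sub_mulVec, Matrix.one_mulVec]
        abel
      rwa [h8] at hlim1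
    · have h9 : ((0 : Fin n → ℝ) + (W *ᵥ ωu - ωu)) + ωu = W *ᵥ ωu := by abel
      rwa [h9] at hlim2
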